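/- Let A, B, C be a triangle and D the midpoint of segment BC. If ∠DAC + ∠ABC = π/2, then dist A C = dist A B or ∠BAC = π/2. -/

import Mathlib

open EuclideanGeometry Real

set_option maxHeartbeats 1000000 in
theorem stmt_4 (A B C D : EuclideanSpace ℝ (Fin 2))
    (hABC : ¬ Collinear ℝ ({A, B, C} : Set (EuclideanSpace ℝ (Fin 2))))
    (hD : D = midpoint ℝ B C)
    (h : ∠ D A C + ∠ A B C = π / 2) :
    dist A C = dist A B ∨ ∠ B A C = π / 2 := by
  set u : EuclideanSpace ℝ (Fin 2) := B - A with hu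
  set v : EuclideanSpace ℝ (Fin 2) := C - A with hv
  set p : ℝ := inner ℝ u v with hp
  set a : ℝ := inner ℝ u u with ha
  set b : ℝ := inner ℝ v v with hb
  have hp' : (inner ℝ v u : ℝ) = p := by rw [real_inner_comm]
  have hAB : A - B = -u := (neg_sub B A).symm
  have hAC : A - C = -v := (neg_sub C A).symm
  have hCB : C - B = v - u := (sub_sub_sub_cancel_right C B A).symm
  -- angle identifications
  have hx : ∠ D A C = InnerProductGeometry.angle (u + v) v := by
    have h1 : D -ᵥ A = ((1:ℝ)/2) • (u + v) := by
      rw [hD, hu, hv, midpoint_eq_smul_add]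
      show (2:ℝ)⁻¹ • (B + C) - A = _
      module
    rw [EuclideanGeometry.angle, h1]
    have h2 : (C -ᵥ A : EuclideanSpace ℝ (Fin 2)) = v := rfl
    rw [h2, InnerProductGeometry.angle_smul_left_of_pos _ _ (by norm_num)]
  have hy : ∠ A B C = InnerProductGeometry.angle (-u) (v - u) := by
    rw [EuclideanGeometry.angle]
    congr 1
  set x := InnerProductGeometry.angle (u + v) v with hxdef
  set y := InnerProductGeometry.angle (-u) (v - u) with hydef
  have hsum : x + y = π / 2 := by rw [← hx, ← hy]; exact h
  have hcx : Real.cos x = Real.sin y := by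
    rw [show x = π/2 - y from by linarith, Real.cos_pi_div_two_sub]
  have hcy : Real.cos y = Real.sin x := by
    rw [show y = π/2 - x from by linarith, Real.cos_pi_div_two_sub]
  -- key equation
  have e1 := InnerProductGeometry.cos_angle_mul_norm_mul_norm (u + v) v
  have e2 := InnerProductGeometry.cos_angle_mul_norm_mul_norm (-u) (v - u)
  have s1 := InnerProductGeometry.sin_angle_mul_norm_mul_norm (u + v) v
  have s2 := InnerProductGeometry.sin_angle_mul_norm_mul_norm (-u) (v - u)
  rw [← hxdef] at e1 s1
  rw [← hydef] at e2 s2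
  have hQ1 : (inner ℝ (u+v) (u+v) : ℝ) * inner ℝ v v - inner ℝ (u+v) v * inner ℝ (u+v) v
      = a * b - p * p := by
    simp only [inner_add_left, inner_add_right, ← hp, ← ha, ← hb, hp']
    ring
  have hQ2 : (inner ℝ (-u) (-u) : ℝ) * inner ℝ (v-u) (v-u) - inner ℝ (-u) (v-u) * inner ℝ (-u) (v-u)
      = a * b - p * p := by
    simp only [inner_sub_left, inner_sub_right, inner_neg_left, inner_neg_right,
      ← hp, ← ha, ← hb, hp']
    ring
  have hQnn : 0 ≤ a * b - p * p := by
    have := real_inner_mul_inner_self_le u v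
    rw [← hp, ← ha, ← hb] at this
    linarith
  have key : (inner ℝ (u+v) v : ℝ) * inner ℝ (-u) (v-u) = a * b - p * p := by
    rw [← e1, ← e2, hcx, hcy,
      show Real.sin y * (‖u + v‖ * ‖v‖) * (Real.sin x * (‖-u‖ * ‖v - u‖))
        = (Real.sin x * (‖u + v‖ * ‖v‖)) * (Real.sin y * (‖-u‖ * ‖v - u‖)) from by ring,
      s1, s2, hQ1, hQ2, Real.mul_self_sqrt hQnn]
  have hinner1 : (inner ℝ (u+v) v : ℝ) = p + b := by
    simp only [inner_add_left, ← hp, ← hb]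
  have hinner2 : (inner ℝ (-u) (v-u) : ℝ) = a - p := by
    simp only [inner_neg_left, inner_sub_right, ← hp, ← ha]
    ring
  rw [hinner1, hinner2] at key
  have hfin : p * (a - b) = 0 := by linear_combination key
  rcases mul_eq_zero.1 hfin with h0 | h0
  · right
    rw [EuclideanGeometry.angle, ← InnerProductGeometry.inner_eq_zero_iff_angle_eq_pi_div_two]
    show (inner ℝ (B - A) (C - A) : ℝ) = 0
    rw [← hu, ← hv, ← hp]; exact h0
  · left
    have hab : a = b := by linarith
    rw [ha, hb, real_inner_self_eq_norm_sq, real_inner_self_eq_norm_sq] at hab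
    have huv : ‖u‖ = ‖v‖ := by
      have h1 : (0:ℝ) ≤ ‖u‖ := norm_nonneg _
      have h2 : (0:ℝ) ≤ ‖v‖ := norm_nonneg _
      nlinarith
    rw [dist_eq_norm, dist_eq_norm, hAC, hAB, norm_neg, norm_neg, huv]
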